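/- Let D = (I_r | M) be a standard representative matrix and 𝔴 a shifting vector. For each basis B of D, the number of integer points z ∈ Z^n such that z + ε𝔴 lies in P(B) for all sufficiently small ε > 0 equals m(B)². -/

import Mathlib

open Matrix MeasureTheory
open scoped ENNReal

noncomputable section

/-- The standard representative matrix `D = (I_r | M)`. -/
def Dmat {r m : ℕ} (M : Matrix (Fin r) (Fin m) ℤ) : Matrix (Fin r) (Fin r ⊕ Fin m) ℤ :=
  Matrix.fromCols 1 M

/-- The dual matrix `D̂ = (-Mᵀ | I_{n-r})`. -/
def Dhat {r m : ℕ} (M : Matrix (Fin r) (Fin m) ℤ) : Matrix (Fin m) (Fin r ⊕ Fin m) ℤ :=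
  Matrix.fromCols (-Mᵀ) 1

/-- The full matrix `𝐃 = (I_r, M ; -Mᵀ, I_{n-r})`. -/
def Dfull {r m : ℕ} (M : Matrix (Fin r) (Fin m) ℤ) :
    Matrix (Fin r ⊕ Fin m) (Fin r ⊕ Fin m) ℤ :=
  Matrix.fromBlocks 1 M (-Mᵀ) 1

/-- Column `j` of `D`, as a real vector. -/
def colD {r m : ℕ} (M : Matrix (Fin r) (Fin m) ℤ) (j : Fin r ⊕ Fin m) : Fin r → ℝ :=
  fun a => (Dmat M a j : ℝ)

/-- Column `j` of `D̂`, as a real vector. -/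
def colDhat {r m : ℕ} (M : Matrix (Fin r) (Fin m) ℤ) (j : Fin r ⊕ Fin m) : Fin m → ℝ :=
  fun a => (Dhat M a j : ℝ)

/-- An order-respecting enumeration of the columns in `B` (via `finSumFinEquiv`). -/
def colEnum {r m : ℕ} (B : Finset (Fin r ⊕ Fin m))
    (h : (B.image finSumFinEquiv).card = r) : Fin r → Fin r ⊕ Fin m :=
  fun i => finSumFinEquiv.symm ((B.image finSumFinEquiv).orderIsoOfFin h i)

/-- The multiplicity `m(B) = |det (D|_B)|` of an `r`-subset of columns. -/
def mult {r m : ℕ} (M : Matrix (Fin r) (Fin m) ℤ) (B : Finset (Fin r ⊕ Fin m)) : ℕ :=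
  if h : (B.image finSumFinEquiv).card = r then
    ((Dmat M).submatrix id (colEnum B h)).det.natAbs
  else 0

/-- `B` is a basis of `D`: an `r`-subset of columns with nonzero determinant. -/
def IsBasis {r m : ℕ} (M : Matrix (Fin r) (Fin m) ℤ) (B : Finset (Fin r ⊕ Fin m)) : Prop :=
  B.card = r ∧ mult M B ≠ 0

/-- Closed fundamental parallelepiped of the vectors `v i`, `i ∈ S`. -/
def PPc {ι κ : Type*} (v : ι → κ → ℝ) (S : Finset ι) : Set (κ → ℝ) :=
  {x | ∃ a : ι → ℝ, (∀ i ∈ S, 0 ≤ a i ∧ a i ≤ 1) ∧ x = ∑ i ∈ S, a i • v i}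

/-- Open fundamental parallelepiped of the vectors `v i`, `i ∈ S`. -/
def PPo {ι κ : Type*} (v : ι → κ → ℝ) (S : Finset ι) : Set (κ → ℝ) :=
  {x | ∃ a : ι → ℝ, (∀ i ∈ S, 0 < a i ∧ a i < 1) ∧ x = ∑ i ∈ S, a i • v i}

/-- The closed parallelepiped `P(B) = P₁(B) × P₂(B) ⊆ ℝⁿ`. -/
def Pclosed {r m : ℕ} (M : Matrix (Fin r) (Fin m) ℤ) (B : Finset (Fin r ⊕ Fin m)) :
    Set ((Fin r ⊕ Fin m) → ℝ) :=
  {x | (x ∘ Sum.inl) ∈ PPc (colD M) B ∧ (x ∘ Sum.inr) ∈ PPc (colDhat M) Bᶜ}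

/-- The open parallelepiped `P(B)° = P₁(B)° × P₂(B)°`. -/
def Popen {r m : ℕ} (M : Matrix (Fin r) (Fin m) ℤ) (B : Finset (Fin r ⊕ Fin m)) :
    Set ((Fin r ⊕ Fin m) → ℝ) :=
  {x | (x ∘ Sum.inl) ∈ PPo (colD M) B ∧ (x ∘ Sum.inr) ∈ PPo (colDhat M) Bᶜ}

/-- The tile `T(D) = ⋃_{B basis} P(B)`. -/
def Tile {r m : ℕ} (M : Matrix (Fin r) (Fin m) ℤ) : Set ((Fin r ⊕ Fin m) → ℝ) :=
  ⋃ B ∈ {B : Finset (Fin r ⊕ Fin m) | IsBasis M B}, Pclosed M B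

/-- The lattice vector `𝐃ᵀ z ∈ ℝⁿ` for `z ∈ ℤⁿ`. -/
def latVec {r m : ℕ} (M : Matrix (Fin r) (Fin m) ℤ) (z : (Fin r ⊕ Fin m) → ℤ) :
    (Fin r ⊕ Fin m) → ℝ :=
  fun j => ((Matrix.vecMul z (Dfull M)) j : ℝ)

/-- The integer lattice `im_ℤ(𝐃ᵀ)` spanned by the rows of `𝐃`. -/
def LatZ {r m : ℕ} (M : Matrix (Fin r) (Fin m) ℤ) : Submodule ℤ ((Fin r ⊕ Fin m) → ℤ) :=
  Submodule.span ℤ (Set.range fun i => Dfull M i)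

/-- `w` is a shifting vector: it does not lie in the span of any facet of `P(B)`
for any basis `B` (split form: neither its first `r` coordinates lie in the span of a
facet of `P₁(B)` nor its last `n-r` coordinates in the span of a facet of `P₂(B)`). -/
def IsShifting {r m : ℕ} (M : Matrix (Fin r) (Fin m) ℤ) (w : (Fin r ⊕ Fin m) → ℝ) : Prop :=
  ∀ B : Finset (Fin r ⊕ Fin m), IsBasis M B →
    (∀ j ∈ B, (w ∘ Sum.inl) ∉ Submodule.span ℝ (colD M '' ↑(B.erase j))) ∧
    (∀ j ∈ Bᶜ, (w ∘ Sum.inr) ∉ Submodule.span ℝ (colDhat M '' ↑(Bᶜ.erase j)))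

/-- `x` is `w`-associated with `B`: `x + εw ∈ P(B)` for all sufficiently small `ε > 0`. -/
def WAssoc {r m : ℕ} (M : Matrix (Fin r) (Fin m) ℤ) (w : (Fin r ⊕ Fin m) → ℝ)
    (x : (Fin r ⊕ Fin m) → ℝ) (B : Finset (Fin r ⊕ Fin m)) : Prop :=
  ∃ ε₀ > (0 : ℝ), ∀ ε : ℝ, 0 < ε → ε < ε₀ → x + ε • w ∈ Pclosed M B

end



-- ===================== auxiliary lemmas =====================

section Aux
open Matrix

lemma mulVecLin_int_injective {k : ℕ} (A : Matrix (Fin k) (Fin k) ℤ) (hA : A.det ≠ 0) :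
    Function.Injective A.mulVecLin := by
  rw [← LinearMap.ker_eq_bot, LinearMap.ker_eq_bot']
  intro x hx
  have hx0 : A *ᵥ x = 0 := hx
  have hx' : (A.map (Int.cast : ℤ → ℚ)) *ᵥ (fun i => (x i : ℚ)) = 0 := by
    ext i
    have : ((A *ᵥ x) i : ℚ) = 0 := by rw [hx0]; simp
    simp only [Pi.zero_apply]
    rw [← this]
    simp [Matrix.mulVec, dotProduct, Matrix.map_apply]
  have hdet : (A.map (Int.cast : ℤ → ℚ)).det ≠ 0 := by
    rw [show A.map (Int.cast : ℤ → ℚ) = (Int.castRingHom ℚ).mapMatrix A from rfl,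
      ← RingHom.map_det]
    simpa using hA
  have hz := Matrix.eq_zero_of_mulVec_eq_zero hdet hx'
  ext i
  have := congrFun hz i
  simpa using this

lemma index_range_mulVecLin {k : ℕ} (A : Matrix (Fin k) (Fin k) ℤ) (hA : A.det ≠ 0) :
    (LinearMap.range A.mulVecLin).toAddSubgroup.index = A.det.natAbs := by
  classical
  have hinj := mulVecLin_int_injective A hA
  set L : Submodule ℤ (Fin k → ℤ) := LinearMap.range A.mulVecLin with hL
  obtain ⟨n, snf⟩ := L.smithNormalForm (Pi.basisFun ℤ (Fin k))
  obtain ⟨bM, bN, f, a, hsnf⟩ := snf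
  set eA : (Fin k → ℤ) ≃ₗ[ℤ] L := LinearEquiv.ofInjective A.mulVecLin hinj with heA
  have hnk : n = k := by
    have := card_eq_of_linearEquiv ℤ (bN.equivFun.symm.trans eA.symm)
    simpa using this
  subst hnk
  set h : (Fin n → ℤ) →ₗ[ℤ] (Fin n → ℤ) := L.subtype ∘ₗ (bM.equiv bN (Equiv.refl _) :
      (Fin n → ℤ) →ₗ[ℤ] L) with hh
  have hassoc : Associated (LinearMap.det A.mulVecLin) (LinearMap.det h) := by
    have h1 : A.mulVecLin = L.subtype ∘ₗ (eA : (Fin n → ℤ) →ₗ[ℤ] L) :=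
      LinearMap.ext fun x => by
        simp only [heA, LinearMap.comp_apply, LinearEquiv.coe_coe, Submodule.coe_subtype]
        exact (LinearEquiv.ofInjective_apply A.mulVecLin x).symm
    rw [h1, hh]
    exact LinearMap.associated_det_comp_equiv _ _ _
  have hfbij : Function.Bijective f :=
    (Fintype.bijective_iff_injective_and_card f).2 ⟨f.injective, by simp⟩
  set φ : Equiv.Perm (Fin n) := Equiv.ofBijective f hfbij with hφ
  have hφf : ∀ j, φ j = f j := fun j => rfl
  have htm : LinearMap.toMatrix bM bM h = (Matrix.diagonal (a ∘ φ.symm)).submatrix id φ := by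
    ext i j
    rw [LinearMap.toMatrix_apply]
    have h2 : h (bM j) = a j • bM (f j) := by
      simp [hh, Submodule.coe_subtype, Module.Basis.equiv_apply, hsnf j]
    rw [h2, LinearEquiv.map_smul, Module.Basis.repr_self]
    simp only [Matrix.submatrix_apply, id_eq, Matrix.diagonal_apply, Function.comp_apply,
      Finsupp.smul_single, smul_eq_mul, mul_one, Finsupp.single_apply]
    by_cases hij : i = f j
    · subst hij
      rw [if_pos rfl, if_pos (by rw [hφf]), ← hφf, Equiv.symm_apply_apply]
    · rw [if_neg (fun hc => hij hc.symm), if_neg (by rw [hφf]; exact hij)]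
  have hdeth : (LinearMap.det h).natAbs = ∏ i, (a i).natAbs := by
    rw [← LinearMap.det_toMatrix bM, htm, Matrix.det_permute', Matrix.det_diagonal]
    have hprod : (∏ i, a (φ.symm i)).natAbs = ∏ i, (a i).natAbs := by
      rw [show (∏ i, a (φ.symm i)).natAbs = ∏ i, (a (φ.symm i)).natAbs from
        map_prod Int.natAbsHom _ Finset.univ]
      exact Equiv.prod_comp φ.symm fun i => (a i).natAbs
    rcases Int.units_eq_one_or (Equiv.Perm.sign φ) with hs | hs <;>
      rw [hs] <;> simp [Int.natAbs_mul, hprod]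
  have hdetA : (LinearMap.det A.mulVecLin) = A.det := by
    rw [show A.mulVecLin = Matrix.toLin' A from rfl, LinearMap.det_toLin']
  have hABS : A.det.natAbs = ∏ i, (a i).natAbs := by
    rw [← hdetA, Int.natAbs_eq_iff_associated.mpr hassoc, hdeth]
  rw [Module.Basis.SmithNormalForm.toAddSubgroup_index_eq_pow_mul_prod ⟨bM, bN, f, a, hsnf⟩]
  simp only [Fintype.card_fin, Nat.sub_self, pow_zero, one_mul]
  rw [hABS]
  exact Finset.prod_congr rfl fun i _ => by
    rw [Ideal.span_singleton_toAddSubgroup_eq_zmultiples, Int.index_zmultiples]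

/-- direction-dependent half-open condition -/
def HOC {k : ℕ} (c : Fin k → ℝ) (a : Fin k → ℝ) : Prop :=
  ∀ j, (0 < c j → (0 ≤ a j ∧ a j < 1)) ∧ (c j < 0 → (0 < a j ∧ a j ≤ 1))

lemma cast_mulVec {k : ℕ} (A : Matrix (Fin k) (Fin k) ℤ) (u : Fin k → ℤ) :
    (fun i => ((A *ᵥ u) i : ℝ)) = (A.map (Int.cast : ℤ → ℝ)) *ᵥ (fun i => (u i : ℝ)) := by
  ext i
  simp [Matrix.mulVec, dotProduct, Matrix.map_apply]

lemma cast_det_ne_zero {k : ℕ} (A : Matrix (Fin k) (Fin k) ℤ) (hA : A.det ≠ 0) :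
    (A.map (Int.cast : ℤ → ℝ)).det ≠ 0 := by
  rw [show A.map (Int.cast : ℤ → ℝ) = (Int.castRingHom ℝ).mapMatrix A from rfl, ← RingHom.map_det]
  simpa using hA

lemma inv_mulVec_mulVec {k : ℕ} (Aℝ : Matrix (Fin k) (Fin k) ℝ) (h : Aℝ.det ≠ 0)
    (x : Fin k → ℝ) : Aℝ⁻¹ *ᵥ (Aℝ *ᵥ x) = x := by
  rw [Matrix.mulVec_mulVec, Matrix.nonsing_inv_mul _ (isUnit_iff_ne_zero.mpr h),
    Matrix.one_mulVec]

lemma mulVec_inv_mulVec {k : ℕ} (Aℝ : Matrix (Fin k) (Fin k) ℝ) (h : Aℝ.det ≠ 0)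
    (x : Fin k → ℝ) : Aℝ *ᵥ (Aℝ⁻¹ *ᵥ x) = x := by
  rw [Matrix.mulVec_mulVec, Matrix.mul_nonsing_inv _ (isUnit_iff_ne_zero.mpr h),
    Matrix.one_mulVec]

lemma card_lattice_halfopen {k : ℕ} (A : Matrix (Fin k) (Fin k) ℤ) (hA : A.det ≠ 0)
    (c : Fin k → ℝ) (hc : ∀ j, c j ≠ 0) :
    Nat.card {z : Fin k → ℤ |
        HOC c ((A.map (Int.cast : ℤ → ℝ))⁻¹ *ᵥ (fun i => (z i : ℝ)))} = A.det.natAbs := by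
  classical
  set Aℝ := A.map (Int.cast : ℤ → ℝ) with hAR
  have hdet := cast_det_ne_zero A hA
  set L : Submodule ℤ (Fin k → ℤ) := LinearMap.range A.mulVecLin with hL
  set coords : (Fin k → ℤ) → (Fin k → ℝ) := fun z => Aℝ⁻¹ *ᵥ (fun i => (z i : ℝ))
    with hcoords
  have hshift : ∀ (z : Fin k → ℤ) (u : Fin k → ℤ),
      coords (z + A *ᵥ u) = coords z + (fun j => (u j : ℝ)) := by
    intro z u
    have : (fun i => (((z + A *ᵥ u) i : ℤ) : ℝ)) =
        (fun i => (z i : ℝ)) + Aℝ *ᵥ (fun i => (u i : ℝ)) := by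
      ext i
      simp only [Pi.add_apply, Int.cast_add]
      rw [show ((A *ᵥ u) i : ℝ) = (Aℝ *ᵥ (fun i => (u i : ℝ))) i from congrFun (cast_mulVec A u) i]
    simp only [hcoords, this, Matrix.mulVec_add, inv_mulVec_mulVec Aℝ hdet]
  set Φ : {z : Fin k → ℤ | HOC c (coords z)} → (Fin k → ℤ) ⧸ L.toAddSubgroup :=
    fun z => QuotientAddGroup.mk (z : Fin k → ℤ) with hΦ
  have hbij : Function.Bijective Φ := by
    constructor
    · rintro ⟨z, hz⟩ ⟨z', hz'⟩ hzz
      have : -(z : Fin k → ℤ) + z' ∈ L.toAddSubgroup := (QuotientAddGroup.eq).1 hzz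
      obtain ⟨u, hu⟩ := this
      have hz'' : z' = z + A *ᵥ u := by
        have : A.mulVecLin u = -z + z' := hu
        rw [show A *ᵥ u = A.mulVecLin u from rfl, this]
        abel
      have hcz : coords z' = coords z + fun j => (u j : ℝ) := by rw [hz'']; exact hshift z u
      have hu0 : ∀ j, u j = 0 := by
        intro j
        have h1 := (hz j)
        have h2 := (hz' j)
        have hdiff : coords z' j - coords z j = (u j : ℝ) := by rw [hcz]; simp
        rcases lt_or_gt_of_ne (hc j) with hcj | hcj
        · obtain ⟨ha1, ha2⟩ := h1.2 hcj
          obtain ⟨hb1, hb2⟩ := h2.2 hcj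
          have h3 : |(u j : ℝ)| < 1 := by rw [← hdiff, abs_lt]; constructor <;> nlinarith
          have h4 : |u j| < 1 := by exact_mod_cast h3
          exact Int.abs_lt_one_iff.mp h4
        · obtain ⟨ha1, ha2⟩ := h1.1 hcj
          obtain ⟨hb1, hb2⟩ := h2.1 hcj
          have h3 : |(u j : ℝ)| < 1 := by rw [← hdiff, abs_lt]; constructor <;> nlinarith
          have h4 : |u j| < 1 := by exact_mod_cast h3
          exact Int.abs_lt_one_iff.mp h4
      have : z' = z := by
        rw [hz'']
        have : A *ᵥ u = 0 := by
          have : u = 0 := funext hu0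
          rw [this, Matrix.mulVec_zero]
        rw [this, add_zero]
      exact Subtype.ext this.symm
    · intro q
      obtain ⟨z, rfl⟩ := QuotientAddGroup.mk_surjective q
      set a := coords z with ha
      set u : Fin k → ℤ := fun j => if 0 < c j then ⌊a j⌋ else ⌈a j⌉ - 1 with hu
      refine ⟨⟨z - A *ᵥ u, ?_⟩, ?_⟩
      · have hz' : coords (z - A *ᵥ u) = coords z - fun j => (u j : ℝ) := by
          have := hshift (z - A *ᵥ u) u
          rw [sub_add_cancel] at this
          rw [this]; abel
        intro j
        rw [hz']
        rcases lt_or_gt_of_ne (hc j) with hcj | hcj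
        · refine ⟨fun h => absurd h (not_lt.mpr hcj.le), fun _ => ?_⟩
          have huj : u j = ⌈a j⌉ - 1 := by rw [hu]; simp [not_lt.mpr hcj.le, hcj.not_gt]
          constructor
          · simp only [Pi.sub_apply, huj]
            push_cast
            have := Int.ceil_lt_add_one (a j)
            push_cast at this
            linarith
          · simp only [Pi.sub_apply, huj]
            push_cast
            have := Int.le_ceil (a j)
            linarith
        · refine ⟨fun _ => ?_, fun h => absurd h (not_lt.mpr hcj.le)⟩
          have huj : u j = ⌊a j⌋ := by rw [hu]; simp [hcj]
          constructor
          · simp only [Pi.sub_apply, huj]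
            have := Int.floor_le (a j)
            simp only [sub_nonneg]
            exact_mod_cast this
          · simp only [Pi.sub_apply, huj]
            have := Int.lt_floor_add_one (a j)
            push_cast
            linarith
      · show QuotientAddGroup.mk _ = QuotientAddGroup.mk z
        rw [QuotientAddGroup.eq]
        refine ⟨u, ?_⟩
        show A *ᵥ u = -(z - A *ᵥ u) + z
        abel
  have hcard := Nat.card_eq_of_bijective Φ hbij
  rw [hcard, show Nat.card ((Fin k → ℤ) ⧸ L.toAddSubgroup) = L.toAddSubgroup.index from rfl]
  exact index_range_mulVecLin A hA

lemma key {k : ℕ} {ι : Type*} [DecidableEq ι] (v : ι → Fin k → ℝ) (S : Finset ι)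
    (σ : Fin k → ι) (hσ : Function.Injective σ) (hS : S = Finset.image σ Finset.univ)
    (A : Matrix (Fin k) (Fin k) ℤ) (hv : ∀ i j, v (σ j) i = (A i j : ℝ))
    (hA : A.det ≠ 0) (w : Fin k → ℝ)
    (hw : ∀ j ∈ S, w ∉ Submodule.span ℝ (v '' ↑(S.erase j))) :
    Nat.card {z : Fin k → ℤ | ∃ ε₀ > (0:ℝ), ∀ ε : ℝ, 0 < ε → ε < ε₀ →
      ((fun i => (z i : ℝ)) + ε • w) ∈ PPc v S} = A.det.natAbs := by
  classical
  set Aℝ := A.map (Int.cast : ℤ → ℝ) with hAR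
  have hdet := cast_det_ne_zero A hA
  have hsum : ∀ b : Fin k → ℝ, ∑ j, b j • v (σ j) = Aℝ *ᵥ b := by
    intro b
    funext i
    rw [Finset.sum_apply]
    simp only [Pi.smul_apply, smul_eq_mul, hv]
    rw [Matrix.mulVec, dotProduct]
    congr 1
    funext j
    rw [mul_comm]
    rfl
  have hPP : ∀ x : Fin k → ℝ, x ∈ PPc v S ↔
      ∃ b : Fin k → ℝ, (∀ j, 0 ≤ b j ∧ b j ≤ 1) ∧ x = Aℝ *ᵥ b := by
    intro x
    constructor
    · rintro ⟨a, ha, rfl⟩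
      refine ⟨fun j => a (σ j), ?_, ?_⟩
      · intro j
        exact ha (σ j) (by rw [hS]; exact Finset.mem_image_of_mem σ (Finset.mem_univ j))
      · rw [hS, Finset.sum_image (fun x _ y _ h => hσ h), hsum]
    · rintro ⟨b, hb, rfl⟩
      refine ⟨Function.extend σ b 0, ?_, ?_⟩
      · intro i hi
        rw [hS] at hi
        obtain ⟨j, _, rfl⟩ := Finset.mem_image.mp hi
        rw [hσ.extend_apply]
        exact hb j
      · rw [hS, Finset.sum_image (fun x _ y _ h => hσ h)]
        rw [← hsum]
        congr 1
        funext j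
        rw [hσ.extend_apply]
  set c : Fin k → ℝ := Aℝ⁻¹ *ᵥ w with hcdef
  have hwc : w = Aℝ *ᵥ c := (mulVec_inv_mulVec Aℝ hdet w).symm
  have hcne : ∀ j, c j ≠ 0 := by
    intro j hcj
    apply hw (σ j) (by rw [hS]; exact Finset.mem_image_of_mem σ (Finset.mem_univ j))
    have : w = ∑ i ∈ Finset.univ.erase j, c i • v (σ i) := by
      rw [hwc, ← hsum c, ← Finset.sum_erase_add _ _ (Finset.mem_univ j), hcj, zero_smul,
        add_zero]
    rw [this]
    refine Submodule.sum_mem _ fun i hi => ?_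
    refine Submodule.smul_mem _ _ (Submodule.subset_span ⟨σ i, ?_, rfl⟩)
    rw [Finset.coe_erase]
    refine ⟨by rw [hS]; exact Finset.mem_image_of_mem σ (Finset.mem_univ i), ?_⟩
    simp only [Set.mem_singleton_iff]
    exact fun h => (Finset.mem_erase.mp hi).1 (hσ h)
  have hchar : ∀ (z : Fin k → ℤ) (ε : ℝ),
      ((fun i => (z i : ℝ)) + ε • w) ∈ PPc v S ↔
      ∀ j, 0 ≤ (Aℝ⁻¹ *ᵥ (fun i => (z i : ℝ))) j + ε * c j ∧
        (Aℝ⁻¹ *ᵥ (fun i => (z i : ℝ))) j + ε * c j ≤ 1 := by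
    intro z ε
    rw [hPP]
    constructor
    · rintro ⟨b, hb, heq⟩
      have hbe : b = Aℝ⁻¹ *ᵥ (fun i => (z i : ℝ)) + ε • c := by
        have := congrArg (fun x => Aℝ⁻¹ *ᵥ x) heq
        rw [inv_mulVec_mulVec Aℝ hdet] at this
        rw [← this, Matrix.mulVec_add, Matrix.mulVec_smul]
      intro j
      have := hb j
      rw [hbe] at this
      simpa [smul_eq_mul] using this
    · intro h
      refine ⟨Aℝ⁻¹ *ᵥ (fun i => (z i : ℝ)) + ε • c, fun j => by simpa [smul_eq_mul] using h j, ?_⟩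
      rw [Matrix.mulVec_add, Matrix.mulVec_smul, mulVec_inv_mulVec Aℝ hdet, ← hwc]
  have hseteq : {z : Fin k → ℤ | ∃ ε₀ > (0:ℝ), ∀ ε : ℝ, 0 < ε → ε < ε₀ →
      ((fun i => (z i : ℝ)) + ε • w) ∈ PPc v S} =
      {z : Fin k → ℤ | HOC c (Aℝ⁻¹ *ᵥ (fun i => (z i : ℝ)))} := by
    ext z
    set a : Fin k → ℝ := Aℝ⁻¹ *ᵥ (fun i => (z i : ℝ)) with hadef
    simp only [Set.mem_setOf_eq]
    constructor
    · rintro ⟨ε₀, hε₀, hev⟩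
      intro j
      have hbnd : ∀ ε : ℝ, 0 < ε → ε < ε₀ → 0 ≤ a j + ε * c j ∧ a j + ε * c j ≤ 1 :=
        fun ε h1 h2 => (hchar z ε).mp (hev ε h1 h2) j
      have h0 : 0 ≤ a j := by
        by_contra hneg
        push_neg at hneg
        have habs : 0 < |c j| := abs_pos.mpr (hcne j)
        set ε := min (ε₀/2) ((-(a j))/(2*|c j|)) with hε
        have hε1 : 0 < ε := lt_min (by linarith) (div_pos (by linarith) (by positivity))
        have hε2 : ε < ε₀ := lt_of_le_of_lt (min_le_left _ _) (by linarith)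
        have := (hbnd ε hε1 hε2).1
        have hle : ε * c j ≤ ε * |c j| := by
          exact mul_le_mul_of_nonneg_left (le_abs_self _) hε1.le
        have : ε * |c j| ≤ (-(a j))/(2*|c j|) * |c j| :=
          mul_le_mul_of_nonneg_right (min_le_right _ _) habs.le
        have heq2 : (-(a j))/(2*|c j|) * |c j| = -(a j)/2 := by
          field_simp
        nlinarith [(hbnd ε hε1 hε2).1]
      have h1 : a j ≤ 1 := by
        by_contra hgt
        push_neg at hgt
        have habs : 0 < |c j| := abs_pos.mpr (hcne j)
        set ε := min (ε₀/2) ((a j - 1)/(2*|c j|)) with hε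
        have hε1 : 0 < ε := lt_min (by linarith) (div_pos (by linarith) (by positivity))
        have hε2 : ε < ε₀ := lt_of_le_of_lt (min_le_left _ _) (by linarith)
        have hle : -(ε * |c j|) ≤ ε * c j := by
          have := mul_le_mul_of_nonneg_left (neg_abs_le (c j)) hε1.le
          nlinarith
        have : ε * |c j| ≤ (a j - 1)/(2*|c j|) * |c j| :=
          mul_le_mul_of_nonneg_right (min_le_right _ _) habs.le
        have heq2 : (a j - 1)/(2*|c j|) * |c j| = (a j - 1)/2 := by
          field_simp
        nlinarith [(hbnd ε hε1 hε2).2]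
      constructor
      · intro hcj
        refine ⟨h0, ?_⟩
        have := (hbnd (ε₀/2) (by linarith) (by linarith)).2
        nlinarith
      · intro hcj
        refine ⟨?_, h1⟩
        have := (hbnd (ε₀/2) (by linarith) (by linarith)).1
        nlinarith
    · intro hhoc
      set t : Fin k → ℝ := fun j => if 0 < c j then (1 - a j)/(c j) else (a j)/(-(c j))
        with ht
      have htpos : ∀ j, 0 < t j := by
        intro j
        rcases lt_or_gt_of_ne (hcne j) with hcj | hcj
        · have := (hhoc j).2 hcj
          rw [ht]
          simp only [hcj.not_gt, if_neg, if_false]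
          exact div_pos this.1 (by linarith)
        · have := (hhoc j).1 hcj
          rw [ht]
          simp only [if_pos hcj]
          exact div_pos (by linarith) hcj
      set s : Finset ℝ := insert (1:ℝ) (Finset.image t Finset.univ) with hs
      have hsne : s.Nonempty := ⟨1, Finset.mem_insert_self _ _⟩
      refine ⟨s.min' hsne, ?_, ?_⟩
      · rcases Finset.mem_insert.mp (s.min'_mem hsne) with h | h
        · rw [h]; norm_num
        · obtain ⟨j, _, hj⟩ := Finset.mem_image.mp h
          rw [← hj]; exact htpos j
      · intro ε hε1 hε2
        rw [hchar]
        intro j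
        have hεt : ε < t j := lt_of_lt_of_le hε2 (Finset.min'_le _ _
          (Finset.mem_insert_of_mem (Finset.mem_image_of_mem t (Finset.mem_univ j))))
        rcases lt_or_gt_of_ne (hcne j) with hcj | hcj
        · obtain ⟨hp, hle⟩ := (hhoc j).2 hcj
          rw [ht] at hεt
          simp only [hcj.not_gt, if_neg, if_false] at hεt
          have : ε * (-(c j)) < a j := by
            rw [lt_div_iff₀ (by linarith)] at hεt
            linarith
          constructor <;> nlinarith
        · obtain ⟨hp, hlt⟩ := (hhoc j).1 hcj
          rw [ht] at hεt
          simp only [if_pos hcj] at hεt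
          have : ε * c j < 1 - a j := by
            rw [lt_div_iff₀ hcj] at hεt
            linarith
          constructor <;> nlinarith
  rw [hseteq]
  exact card_lattice_halfopen A hA c hcne

lemma enum_inj {α : Type*} [LinearOrder α] (S : Finset α) {k : ℕ} (h : S.card = k) :
    Function.Injective (fun i : Fin k => ((S.orderIsoOfFin h i : α))) := by
  intro i j hij
  exact (S.orderIsoOfFin h).injective (Subtype.ext hij)

lemma enum_image {α : Type*} [LinearOrder α] (S : Finset α) {k : ℕ} (h : S.card = k) :
    S = Finset.image (fun i : Fin k => ((S.orderIsoOfFin h i : α))) Finset.univ := by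
  ext x
  simp only [Finset.mem_image, Finset.mem_univ, true_and]
  constructor
  · intro hx
    obtain ⟨i, hi⟩ := (S.orderIsoOfFin h).surjective ⟨x, hx⟩
    exact ⟨i, congrArg Subtype.val hi⟩
  · rintro ⟨i, rfl⟩
    exact (S.orderIsoOfFin h i).2

lemma sumEnum_facts {r m k : ℕ} (S : Finset (Fin r ⊕ Fin m))
    (h : (S.image finSumFinEquiv).card = k) :
    Function.Injective (fun i : Fin k =>
      finSumFinEquiv.symm ((S.image finSumFinEquiv).orderIsoOfFin h i : Fin (r + m))) ∧
    S = Finset.image (fun i : Fin k =>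
      finSumFinEquiv.symm ((S.image finSumFinEquiv).orderIsoOfFin h i : Fin (r + m)))
      Finset.univ := by
  constructor
  · intro i j hij
    exact enum_inj _ h (finSumFinEquiv.symm.injective hij)
  · ext x
    simp only [Finset.mem_image, Finset.mem_univ, true_and]
    constructor
    · intro hx
      obtain ⟨i, hi⟩ := ((S.image finSumFinEquiv).orderIsoOfFin h).surjective
        ⟨finSumFinEquiv x, Finset.mem_image_of_mem _ hx⟩
      refine ⟨i, ?_⟩
      rw [show ((S.image finSumFinEquiv).orderIsoOfFin h i : Fin (r + m)) = finSumFinEquiv x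
        from congrArg Subtype.val hi, Equiv.symm_apply_apply]
    · rintro ⟨i, rfl⟩
      have h2 := ((S.image finSumFinEquiv).orderIsoOfFin h i).2
      obtain ⟨b, hb, hbe⟩ := Finset.mem_image.mp h2
      rw [← hbe, Equiv.symm_apply_apply]
      exact hb

lemma DDhatT {r m : ℕ} (M : Matrix (Fin r) (Fin m) ℤ) : Dmat M * (Dhat M)ᵀ = 0 := by
  rw [Dmat, Dhat, Matrix.transpose_fromCols, Matrix.fromCols_mul_fromRows]
  simp

lemma DDT {r m : ℕ} (M : Matrix (Fin r) (Fin m) ℤ) : Dmat M * (Dmat M)ᵀ = 1 + M * Mᵀ := by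
  rw [Dmat, Matrix.transpose_fromCols, Matrix.fromCols_mul_fromRows]
  simp

lemma detDfull {r m : ℕ} (M : Matrix (Fin r) (Fin m) ℤ) :
    (Dfull M).det = (1 + M * Mᵀ).det := by
  rw [Dfull, Matrix.det_fromBlocks_one₂₂]
  congr 1
  rw [Matrix.mul_neg, sub_neg_eq_add]

lemma det_one_add_self_mul_transpose_ne_zero {r m : ℕ} (M : Matrix (Fin r) (Fin m) ℤ) :
    (1 + M * Mᵀ).det ≠ 0 := by
  have hmap : ((1 + M * Mᵀ).map (Int.cast : ℤ → ℝ)).det = ((1 + M * Mᵀ).det : ℝ) := by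
    have h0 : (1 + M * Mᵀ).map (Int.cast : ℤ → ℝ) = (Int.castRingHom ℝ).mapMatrix (1 + M * Mᵀ) :=
      rfl
    rw [h0, ← RingHom.map_det]
    rfl
  set Mr : Matrix (Fin r) (Fin m) ℝ := M.map (Int.cast : ℤ → ℝ) with hMr
  have hmm : (1 + M * Mᵀ).map (Int.cast : ℤ → ℝ) = 1 + Mr * Mrᵀ := by
    ext i j
    simp [Matrix.map_apply, Matrix.mul_apply, Matrix.one_apply, hMr, Matrix.transpose_apply,
      apply_ite (Int.cast : ℤ → ℝ)]
  have hpsd : (Mr * Mrᵀ).PosSemidef := by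
    have := Matrix.posSemidef_self_mul_conjTranspose Mr
    simpa using this
  have hpd : (1 + Mr * Mrᵀ).PosDef := by
    have h1 : (1 : Matrix (Fin r) (Fin r) ℝ).PosDef := Matrix.PosDef.one
    simpa using h1.add_posSemidef hpsd
  have hpos : 0 < (1 + Mr * Mrᵀ).det := hpd.det_pos
  intro hcontra
  rw [← hmm, hmap, hcontra] at hpos
  simp at hpos

lemma duality {r m : ℕ} (M : Matrix (Fin r) (Fin m) ℤ) (B : Finset (Fin r ⊕ Fin m))
    (σ : Fin r → Fin r ⊕ Fin m) (τ : Fin m → Fin r ⊕ Fin m)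
    (hσi : Function.Injective σ) (hτi : Function.Injective τ)
    (hσB : B = Finset.image σ Finset.univ) (hτB : Bᶜ = Finset.image τ Finset.univ) :
    ((Dhat M).submatrix id τ).det.natAbs = ((Dmat M).submatrix id σ).det.natAbs := by
  classical
  set P := (Dmat M).submatrix id σ with hP
  set Q := (Dhat M).submatrix id τ with hQ
  have hστ : ∀ i j, σ i ≠ τ j := by
    intro i j hc
    have h1 : σ i ∈ B := by rw [hσB]; exact Finset.mem_image_of_mem σ (Finset.mem_univ i)
    have h2 : τ j ∈ Bᶜ := by rw [hτB]; exact Finset.mem_image_of_mem τ (Finset.mem_univ j)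
    rw [hc] at h1
    exact (Finset.mem_compl.mp h2) h1
  set E : Matrix (Fin m) (Fin r ⊕ Fin m) ℤ := Matrix.of (fun j q => if q = τ j then 1 else 0)
    with hE
  set N : Matrix (Fin r ⊕ Fin m) (Fin r ⊕ Fin m) ℤ := Matrix.fromRows (Dmat M) E with hN
  have hDfull : (Dfull M)ᵀ = Matrix.fromCols (Dmat M)ᵀ (Dhat M)ᵀ := by
    rw [Dfull, ← Matrix.fromRows_fromCols_eq_fromBlocks, Matrix.transpose_fromRows,
      Dmat, Dhat]
  have hEDhat : E * (Dhat M)ᵀ = Qᵀ := by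
    ext j b
    simp only [Matrix.mul_apply, hE, Matrix.of_apply, Matrix.transpose_apply,
      Matrix.submatrix_apply, id_eq, hQ, ite_mul, one_mul, zero_mul]
    rw [Finset.sum_ite_eq' Finset.univ (τ j) (fun s => Dhat M b s)]
    simp
  have hfactA : N * (Dfull M)ᵀ =
      Matrix.fromBlocks (1 + M * Mᵀ) 0 (E * (Dmat M)ᵀ) Qᵀ := by
    rw [hN, hDfull, Matrix.fromRows_mul_fromCols, DDT M, DDhatT M, hEDhat]
  have hdetA : N.det * (Dfull M).det = (1 + M * Mᵀ).det * Q.det := by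
    have := congrArg Matrix.det hfactA
    rw [Matrix.det_mul, Matrix.det_transpose, Matrix.det_fromBlocks_zero₁₂,
      Matrix.det_transpose] at this
    exact this
  have hdetNQ : N.det = Q.det := by
    have hd := det_one_add_self_mul_transpose_ne_zero M
    rw [detDfull M] at hdetA
    rw [mul_comm] at hdetA
    exact mul_left_cancel₀ hd hdetA
  set ρ : (Fin r ⊕ Fin m) → (Fin r ⊕ Fin m) := Sum.elim σ τ with hρ
  have hρinj : Function.Injective ρ := by
    intro p q hpq
    cases p with
    | inl i => cases q with
      | inl i' => exact congrArg Sum.inl (hσi (by exact hpq))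
      | inr j => exact absurd hpq (hστ i j)
    | inr j => cases q with
      | inl i' => exact absurd hpq.symm (hστ i' j)
      | inr j' => exact congrArg Sum.inr (hτi (by exact hpq))
  have hρbij : Function.Bijective ρ := Finite.injective_iff_bijective.mp hρinj
  set ρe : Equiv.Perm (Fin r ⊕ Fin m) := Equiv.ofBijective ρ hρbij with hρe
  have hsub : N.submatrix id ρe = Matrix.fromBlocks P ((Dmat M).submatrix id τ) 0 1 := by
    ext p q
    cases p with
    | inl i => cases q with
      | inl i' => rfl
      | inr j => rfl
    | inr j => cases q with
      | inl i' =>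
        show (if σ i' = τ j then (1:ℤ) else 0) = 0
        exact if_neg (hστ i' j)
      | inr j' =>
        show (if τ j' = τ j then (1:ℤ) else 0) = (1 : Matrix (Fin m) (Fin m) ℤ) j j'
        rw [Matrix.one_apply]
        by_cases h : j' = j
        · subst h; rw [if_pos rfl, if_pos rfl]
        · rw [if_neg (fun hc => h (hτi hc)), if_neg (fun hc => h (hc.symm))]
  have hdetNP : N.det.natAbs = P.det.natAbs := by
    have h1 := Matrix.det_permute' ρe N
    rw [hsub, Matrix.det_fromBlocks_zero₂₁, Matrix.det_one, mul_one] at h1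
    have h2 := congrArg Int.natAbs h1
    rcases Int.units_eq_one_or (Equiv.Perm.sign ρe) with hs | hs <;>
      rw [hs] at h2 <;> simp [Int.natAbs_mul] at h2 <;> omega
  rw [← hdetNQ, hdetNP]

end Aux

/-- for a shifting vector `𝔴` and a basis `B`, exactly `m(B)²` integer
points `z` satisfy `z + ε𝔴 ∈ P(B)` for all sufficiently small `ε > 0`. -/
theorem stmt15 {r m : ℕ} (M : Matrix (Fin r) (Fin m) ℤ)
    (w : (Fin r ⊕ Fin m) → ℝ) (hw : IsShifting M w)
    (B : Finset (Fin r ⊕ Fin m)) (hB : IsBasis M B) :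
    Nat.card {z : (Fin r ⊕ Fin m) → ℤ | WAssoc M w (fun j => (z j : ℝ)) B} =
      (mult M B) ^ 2 := by
  classical
  obtain ⟨hBr, hmne⟩ := hB
  have hcard : (B.image finSumFinEquiv).card = r := by
    rw [Finset.card_image_of_injective _ finSumFinEquiv.injective]
    exact hBr
  obtain ⟨hσinj, hσim⟩ := sumEnum_facts B hcard
  set σ : Fin r → Fin r ⊕ Fin m := colEnum B hcard with hσdef
  set A₁ : Matrix (Fin r) (Fin r) ℤ := (Dmat M).submatrix id σ with hA₁
  have hmult : mult M B = A₁.det.natAbs := by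
    rw [mult, dif_pos hcard]
  have hdet1 : A₁.det ≠ 0 := fun h0 => hmne (by rw [hmult, h0]; rfl)
  have hcardc : (Bᶜ.image finSumFinEquiv).card = m := by
    rw [Finset.card_image_of_injective _ finSumFinEquiv.injective, Finset.card_compl, hBr]
    simp only [Fintype.card_sum, Fintype.card_fin]
    omega
  obtain ⟨hτinj, hτim⟩ := sumEnum_facts Bᶜ hcardc
  set τ : Fin m → Fin r ⊕ Fin m := fun i =>
    finSumFinEquiv.symm ((Bᶜ.image finSumFinEquiv).orderIsoOfFin hcardc i) with hτdef
  set A₂ : Matrix (Fin m) (Fin m) ℤ := (Dhat M).submatrix id τ with hA₂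
  have hdual : A₂.det.natAbs = A₁.det.natAbs :=
    duality M B σ τ hσinj hτinj hσim hτim
  have hdet2 : A₂.det ≠ 0 := by
    intro h0
    rw [h0] at hdual
    exact hmne (by rw [hmult, ← hdual]; rfl)
  have hw' := hw B ⟨hBr, hmne⟩
  have key1 := key (colD M) B σ hσinj hσim A₁ (fun i j => rfl) hdet1
    (w ∘ Sum.inl) hw'.1
  have key2 := key (colDhat M) Bᶜ τ hτinj hτim A₂ (fun i j => rfl) hdet2
    (w ∘ Sum.inr) hw'.2
  set S₁ : Set (Fin r → ℤ) := {z : Fin r → ℤ | ∃ ε₀ > (0:ℝ), ∀ ε : ℝ, 0 < ε → ε < ε₀ →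
      ((fun i => (z i : ℝ)) + ε • (w ∘ Sum.inl)) ∈ PPc (colD M) B} with hS₁
  set S₂ : Set (Fin m → ℤ) := {z : Fin m → ℤ | ∃ ε₀ > (0:ℝ), ∀ ε : ℝ, 0 < ε → ε < ε₀ →
      ((fun i => (z i : ℝ)) + ε • (w ∘ Sum.inr)) ∈ PPc (colDhat M) Bᶜ} with hS₂
  have hsplit : ∀ z : (Fin r ⊕ Fin m) → ℤ, WAssoc M w (fun j => (z j : ℝ)) B ↔
      ((fun i => z (Sum.inl i)) ∈ S₁ ∧ (fun j => z (Sum.inr j)) ∈ S₂) := by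
    intro z
    constructor
    · rintro ⟨ε₀, hε₀, h⟩
      exact ⟨⟨ε₀, hε₀, fun ε h1 h2 => (h ε h1 h2).1⟩,
        ⟨ε₀, hε₀, fun ε h1 h2 => (h ε h1 h2).2⟩⟩
    · rintro ⟨⟨ε₁, hε₁, h1⟩, ⟨ε₂, hε₂, h2⟩⟩
      refine ⟨min ε₁ ε₂, lt_min hε₁ hε₂, fun ε hp hl => ?_⟩
      exact ⟨h1 ε hp (lt_of_lt_of_le hl (min_le_left _ _)),
        h2 ε hp (lt_of_lt_of_le hl (min_le_right _ _))⟩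
  have e : {z : (Fin r ⊕ Fin m) → ℤ | WAssoc M w (fun j => (z j : ℝ)) B} ≃ S₁ × S₂ :=
    { toFun := fun z => (⟨fun i => z.1 (Sum.inl i), ((hsplit z.1).mp z.2).1⟩,
        ⟨fun j => z.1 (Sum.inr j), ((hsplit z.1).mp z.2).2⟩)
      invFun := fun p => ⟨Sum.elim p.1.1 p.2.1, (hsplit _).mpr ⟨p.1.2, p.2.2⟩⟩
      left_inv := fun z => Subtype.ext (funext fun s => by cases s <;> rfl)
      right_inv := fun p => by
        refine Prod.ext ?_ ?_ <;> exact Subtype.ext rfl }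
  rw [Nat.card_congr e, Nat.card_prod, key1, key2, hdual, ← hmult, sq]
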